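/- For all real numbers λ, s, σ with 0 < λ ≤ 1 and 0 < s ≤ σ ≤ 1, one has 0 ≤ ((s + σ)/s)·(1 − λ^s) and ((s + σ)/s)·(1 − λ^s) ≤ λ^(−σ), where λ^s and λ^(−σ) denote real powers (Real.rpow). -/

import Mathlib

/-- Lemma (futoushiki1): for `0 < λ ≤ 1` and `0 < s ≤ σ ≤ 1`,
`0 ≤ ((s + σ)/s) * (1 - λ^s)` and `((s + σ)/s) * (1 - λ^s) ≤ λ^(-σ)`,
where powers are real powers (`Real.rpow`). -/
theorem stmt_0 (lam s σ : ℝ) (hlam0 : 0 < lam) (hlam1 : lam ≤ 1)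
    (hs : 0 < s) (hsσ : s ≤ σ) (hσ : σ ≤ 1) :
    0 ≤ ((s + σ) / s) * (1 - lam ^ s) ∧
      ((s + σ) / s) * (1 - lam ^ s) ≤ lam ^ (-σ) := by
  set x := lam ^ s with hxdef
  have hx0 : 0 < x := Real.rpow_pos_of_pos hlam0 s
  have hx1 : x ≤ 1 := Real.rpow_le_one hlam0.le hlam1 hs.le
  set r := σ / s with hrdef
  have hr : 1 ≤ r := (one_le_div hs).mpr hsσ
  have hfrac : (s + σ) / s = 1 + r := by
    rw [hrdef]; field_simp
  constructor
  · apply mul_nonneg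
    · rw [hfrac]; linarith
    · linarith
  · -- λ^{-σ} = (x⁻¹)^r
    have hσeq : lam ^ (-σ) = (x⁻¹) ^ r := by
      have h1 : lam ^ ((-s) * r) = (lam ^ (-s)) ^ r := Real.rpow_mul hlam0.le (-s) r
      have h2 : (-s) * r = -σ := by rw [hrdef]; field_simp
      rw [h2] at h1
      rw [h1, Real.rpow_neg hlam0.le, hxdef]
    have hb : 1 + r * (x⁻¹ - 1) ≤ (x⁻¹) ^ r := by
      have := one_add_mul_self_le_rpow_one_add (s := x⁻¹ - 1) (by
        have : 0 ≤ x⁻¹ - 1 := by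
          have : 1 ≤ x⁻¹ := one_le_inv_iff₀.mpr ⟨hx0, hx1⟩
          linarith
        linarith) hr
      simpa using this
    rw [hfrac, hσeq]
    refine le_trans ?_ hb
    have hxinv : x * x⁻¹ = 1 := mul_inv_cancel₀ hx0.ne'
    nlinarith [mul_pos hx0 hx0, sq_nonneg (1 - x)]
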